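/- The kernel of ε is the ideal of ℂ[A_0,…,A_d] generated by the polynomials A_{i−1}·A_{j+1} − A_i·A_j for 1 ≤ i ≤ j ≤ d−1. -/

import Mathlib

open MvPolynomial

/-- The variable `A_j` of `ℂ[A_0,…,A_d]` (for `0 ≤ j ≤ d`; the value for `j > d` is
irrelevant). -/
noncomputable def Av (d j : ℕ) : MvPolynomial (Fin (d + 1)) ℂ :=
  if h : j < d + 1 then X ⟨j, h⟩ else 0

/-- The homomorphism `ε : ℂ[A_0,…,A_d] → ℂ[t,u]`, `A_i ↦ t^{d−i}·u^i`, with `t = X 0`,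
`u = X 1`. -/
noncomputable def eps (d : ℕ) : MvPolynomial (Fin (d + 1)) ℂ →ₐ[ℂ] MvPolynomial (Fin 2) ℂ :=
  MvPolynomial.aeval (fun i => X 0 ^ (d - (i : ℕ)) * X 1 ^ (i : ℕ))

namespace Stmt12Aux
variable (d : ℕ)
lemma Av_eq (j : ℕ) (hj : j ≤ d) : Av d j = X (⟨j, by omega⟩ : Fin (d+1)) := by
  simp [Av, Nat.lt_succ_of_le hj]
lemma eps_Av (j : ℕ) (hj : j ≤ d) :
    eps d (Av d j) = X 0 ^ (d - j) * X 1 ^ j := by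
  rw [Av_eq d j hj]; simp [eps]

noncomputable def Nf (k s : ℕ) : MvPolynomial (Fin (d+1)) ℂ :=
  if s % d = 0 then Av d 0 ^ (k - s / d) * Av d d ^ (s / d)
  else Av d 0 ^ (k - s / d - 1) * Av d (s % d) * Av d d ^ (s / d)

lemma eps_Nf (hd : 1 ≤ d) (k s : ℕ) (hs : s ≤ k * d) :
    eps d (Nf d k s) = X 0 ^ (k * d - s) * X 1 ^ s := by
  obtain ⟨q, r, rfl, hr⟩ : ∃ q r, s = d * q + r ∧ r < d :=
    ⟨s / d, s % d, (Nat.div_add_mod s d).symm, Nat.mod_lt _ (by omega)⟩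
  rw [mul_comm k d] at hs ⊢
  have h1 : (d * q + r) / d = q := by
    rw [Nat.mul_add_div (by omega), Nat.div_eq_of_lt hr, Nat.add_zero]
  have h2 : (d * q + r) % d = r := by
    rw [Nat.mul_add_mod]
    exact Nat.mod_eq_of_lt hr
  rw [Nf, h1, h2]
  have hq : q ≤ k := by
    by_contra h
    have : d * (k+1) ≤ d * q := Nat.mul_le_mul_left d (by omega)
    have : d * (k+1) = d * k + d := by ring
    omega
  by_cases h0 : r = 0
  · rw [if_pos h0]
    simp only [map_mul, map_pow, eps_Av d 0 (by omega), eps_Av d d le_rfl,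
      Nat.sub_zero, pow_zero, mul_one, Nat.sub_self, one_mul]
    rw [← pow_mul, ← pow_mul]
    have hA : d * (k - q) = d * k - (d * q + r) := by rw [Nat.mul_sub]; omega
    have hB : d * q = d * q + r := by omega
    rw [hA, ← hB]
  · rw [if_neg h0]
    have hq' : q + 1 ≤ k := by
      rcases Nat.lt_or_ge q k with h | h
      · omega
      · exfalso
        have : d * k ≤ d * q := Nat.mul_le_mul_left d h
        omega
    simp only [map_mul, map_pow, eps_Av d 0 (by omega), eps_Av d d le_rfl,
      eps_Av d r (by omega),
      Nat.sub_zero, pow_zero, mul_one, Nat.sub_self, one_mul]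
    rw [← pow_mul, ← pow_mul]
    have hA : d * k - (d * q + r) = d * (k - q - 1) + (d - r) := by
      have h3 : d * (q + 1) ≤ d * k := Nat.mul_le_mul_left d hq'
      have h4 : d * (q + 1) = d * q + d := by ring
      rw [Nat.mul_sub, Nat.mul_sub, mul_one]; omega
    have hB : d * q + r = r + d * q := by omega
    rw [hA, hB, pow_add, pow_add]
    ring

def relSet : Set (MvPolynomial (Fin (d+1)) ℂ) :=
  {P | ∃ i j : ℕ, 1 ≤ i ∧ i ≤ j ∧ j ≤ d - 1 ∧
    P = Av d (i - 1) * Av d (j + 1) - Av d i * Av d j}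

noncomputable def Irel : Ideal (MvPolynomial (Fin (d+1)) ℂ) := Ideal.span (relSet d)

lemma span_le_ker (hd : 1 ≤ d) : Irel d ≤ RingHom.ker (eps d) := by
  rw [Irel, Ideal.span_le]
  rintro P ⟨i, j, h1, h2, h3, rfl⟩
  have hj : j + 1 ≤ d := by omega
  have hi : i ≤ d := by omega
  simp only [SetLike.mem_coe, RingHom.mem_ker, map_sub, map_mul,
    eps_Av d (i-1) (by omega), eps_Av d (j+1) (by omega),
    eps_Av d i (by omega), eps_Av d j (by omega)]
  obtain ⟨p, rfl⟩ : ∃ p, i = p + 1 := ⟨i - 1, by omega⟩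
  have e1 : p + 1 - 1 = p := by omega
  have e2 : d - p = (d - (p+1)) + 1 := by omega
  have e3 : d - j = (d - (j+1)) + 1 := by omega
  rw [e1, e2, e3]
  ring

noncomputable def mprod (m : Multiset (Fin (d+1))) : MvPolynomial (Fin (d+1)) ℂ :=
  (m.map X).prod

def msum (m : Multiset (Fin (d+1))) : ℕ := (m.map Fin.val).sum

def msq (m : Multiset (Fin (d+1))) : ℕ := (m.map (fun i => i.val * i.val)).sum

lemma msum_le (m : Multiset (Fin (d+1))) : msum d m ≤ Multiset.card m * d := by
  induction m using Multiset.induction with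
  | empty => simp [msum]
  | cons a t ih =>
      simp only [msum, Multiset.map_cons, Multiset.sum_cons, Multiset.card_cons] at *
      have : a.val ≤ d := by omega
      have : (Multiset.card t + 1) * d = Multiset.card t * d + d := by ring
      omega

lemma msq_le (m : Multiset (Fin (d+1))) : msq d m ≤ Multiset.card m * (d * d) := by
  induction m using Multiset.induction with
  | empty => simp [msq]
  | cons a t ih =>
      simp only [msq, Multiset.map_cons, Multiset.sum_cons, Multiset.card_cons] at *
      have h1 : a.val ≤ d := by omega
      have h2 : a.val * a.val ≤ d * d := Nat.mul_le_mul h1 h1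
      have : (Multiset.card t + 1) * (d * d) = Multiset.card t * (d * d) + d * d := by ring
      omega

lemma mprod_replicate (n : ℕ) (a : Fin (d+1)) :
    mprod d (Multiset.replicate n a) = X a ^ n := by
  simp [mprod, Multiset.map_replicate, Multiset.prod_replicate]

/-- Base case: at most one "interior" index. -/
lemma base (hd : 1 ≤ d) (m : Multiset (Fin (d+1)))
    (h : Multiset.card (m.filter (fun i => 0 < i.val ∧ i.val < d)) ≤ 1) :
    mprod d m = Nf d (Multiset.card m) (msum d m) := by
  classical
  set p : Fin (d+1) → Prop := fun i => 0 < i.val ∧ i.val < d with hp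
  set inter := m.filter p with hinter
  set rest := m.filter (fun i => ¬ p i) with hrest
  have hm : inter + rest = m := Multiset.filter_add_not p m
  -- split rest into zeros and d's
  set r0 := rest.filter (fun i => i.val = 0) with hr0
  set rd := rest.filter (fun i => ¬ i.val = 0) with hrd
  have hrest2 : r0 + rd = rest := Multiset.filter_add_not _ rest
  have h0rep : r0 = Multiset.replicate (Multiset.card r0) ⟨0, by omega⟩ := by
    rw [Multiset.eq_replicate]
    refine ⟨rfl, fun b hb => ?_⟩
    rw [hr0, Multiset.mem_filter] at hb
    exact Fin.ext hb.2
  have hdrep : rd = Multiset.replicate (Multiset.card rd) ⟨d, by omega⟩ := by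
    rw [Multiset.eq_replicate]
    refine ⟨rfl, fun b hb => ?_⟩
    rw [hrd, Multiset.mem_filter] at hb
    have hb2 := hb.2
    have hb1 : ¬ p b := by
      have := hb.1
      rw [hrest, Multiset.mem_filter] at this
      exact this.2
    have hb1' : ¬ (0 < b.val ∧ b.val < d) := hb1
    have hble : b.val ≤ d := by omega
    have : b.val = d := by
      by_contra hne
      exact hb1' ⟨Nat.pos_of_ne_zero hb2, by omega⟩
    exact Fin.ext this
  set P := Multiset.card r0 with hP
  set Q := Multiset.card rd with hQ
  have hmprod_rest : mprod d rest = X (⟨0, by omega⟩ : Fin (d+1)) ^ P *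
      X (⟨d, by omega⟩ : Fin (d+1)) ^ Q := by
    rw [← hrest2, mprod, Multiset.map_add, Multiset.prod_add]
    rw [show (Multiset.map X r0).prod = mprod d r0 from rfl,
        show (Multiset.map X rd).prod = mprod d rd from rfl]
    rw [h0rep, hdrep, mprod_replicate, mprod_replicate]
  have hmsum_rest : msum d rest = Q * d := by
    rw [← hrest2, msum, Multiset.map_add, Multiset.sum_add]
    rw [show (Multiset.map Fin.val r0).sum = msum d r0 from rfl,
        show (Multiset.map Fin.val rd).sum = msum d rd from rfl]
    rw [h0rep, hdrep]
    simp [msum, Multiset.map_replicate, Multiset.sum_replicate, mul_comm]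
  have hcard_rest : Multiset.card rest = P + Q := by
    rw [← hrest2]; simp; rfl
  -- case on inter
  interval_cases hc : Multiset.card inter
  · -- inter empty
    have hie : inter = 0 := Multiset.card_eq_zero.mp hc
    have hmm : m = rest := by rw [← hm, hie, zero_add]
    rw [hmm, hmprod_rest, hmsum_rest, hcard_rest]
    have h1 : (Q * d) % d = 0 := by simp [Nat.mul_mod_left]
    have h2 : (Q * d) / d = Q := Nat.mul_div_cancel _ (by omega)
    rw [Nf, if_pos h1, h2]
    rw [Av_eq d 0 (by omega), Av_eq d d le_rfl]
    have : P + Q - Q = P := by omega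
    rw [this]
  · -- inter = {c}
    obtain ⟨c, hc'⟩ := Multiset.card_eq_one.mp hc
    have hcmem : c ∈ inter := by rw [hc']; simp
    have hcp : 0 < c.val ∧ c.val < d := by
      rw [hinter, Multiset.mem_filter] at hcmem; exact hcmem.2
    have hmm : m = c ::ₘ rest := by rw [← hm, hc']; rfl
    rw [hmm]
    have hmp : mprod d (c ::ₘ rest) = X c * mprod d rest := by
      simp [mprod]
    have hms : msum d (c ::ₘ rest) = c.val + msum d rest := by
      simp [msum]
    rw [hmp, hms, hmprod_rest, hmsum_rest]
    have hcard : Multiset.card (c ::ₘ rest) = P + Q + 1 := by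
      rw [Multiset.card_cons, hcard_rest]
    rw [hcard]
    have h1 : (c.val + Q * d) % d = c.val := by
      rw [Nat.add_mul_mod_self_right, Nat.mod_eq_of_lt hcp.2]
    have h2 : (c.val + Q * d) / d = Q := by
      rw [Nat.add_mul_div_right _ _ (by omega : 0 < d), Nat.div_eq_of_lt hcp.2, Nat.zero_add]
    rw [Nf, if_neg (by rw [h1]; omega), h1, h2]
    rw [Av_eq d 0 (by omega), Av_eq d d le_rfl, Av_eq d c.val (by omega)]
    have : P + Q + 1 - Q - 1 = P := by omega
    rw [this]
    have : (⟨c.val, by omega⟩ : Fin (d+1)) = c := Fin.ext rfl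
    rw [this]
    ring

lemma step (hd : 1 ≤ d) (x y : Fin (d+1)) (rest : Multiset (Fin (d+1)))
    (hx : 0 < x.val) (hxy : x.val ≤ y.val) (hy : y.val < d) :
    mprod d (x ::ₘ y ::ₘ rest) -
      mprod d ((⟨x.val - 1, by omega⟩ : Fin (d+1)) ::ₘ (⟨y.val + 1, by omega⟩ : Fin (d+1)) ::ₘ rest)
      ∈ Irel d := by
  have hgen : Av d (x.val - 1) * Av d (y.val + 1) - Av d x.val * Av d y.val ∈ Irel d :=
    Ideal.subset_span ⟨x.val, y.val, hx, hxy, by omega, rfl⟩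
  have hexp : mprod d (x ::ₘ y ::ₘ rest) -
      mprod d ((⟨x.val - 1, by omega⟩ : Fin (d+1)) ::ₘ (⟨y.val + 1, by omega⟩ : Fin (d+1)) ::ₘ rest)
      = -((Av d (x.val - 1) * Av d (y.val + 1) - Av d x.val * Av d y.val) * mprod d rest) := by
    simp only [mprod, Multiset.map_cons, Multiset.prod_cons]
    rw [Av_eq d (x.val - 1) (by omega), Av_eq d (y.val + 1) (by omega),
        Av_eq d x.val (by omega), Av_eq d y.val (by omega)]
    have e1 : (⟨x.val, by omega⟩ : Fin (d+1)) = x := Fin.ext rfl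
    have e2 : (⟨y.val, by omega⟩ : Fin (d+1)) = y := Fin.ext rfl
    rw [e1, e2]
    ring
  rw [hexp]
  exact (Irel d).neg_mem (Ideal.mul_mem_right _ _ hgen)

lemma reduce (hd : 1 ≤ d) (m : Multiset (Fin (d+1))) :
    mprod d m - Nf d (Multiset.card m) (msum d m) ∈ Irel d := by
  classical
  generalize hn : Multiset.card m * (d * d) - msq d m = n
  induction n using Nat.strong_induction_on generalizing m with
  | _ n ih =>
  have hn' : Multiset.card m * (d * d) - msq d m = n := by assumption
  by_cases hbase : Multiset.card (m.filter (fun i => 0 < i.val ∧ i.val < d)) ≤ 1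
  · rw [base d hd m hbase, sub_self]
    exact (Irel d).zero_mem
  · push_neg at hbase
    have hpos : 0 < Multiset.card (m.filter (fun i => 0 < i.val ∧ i.val < d)) := by omega
    obtain ⟨a, ha⟩ := Multiset.card_pos_iff_exists_mem.mp hpos
    obtain ⟨t1, ht1⟩ := Multiset.exists_cons_of_mem ha
    have ht1card : 1 ≤ Multiset.card t1 := by
      rw [ht1, Multiset.card_cons] at hbase
      omega
    obtain ⟨b, hb⟩ : ∃ b, b ∈ t1 := Multiset.card_pos_iff_exists_mem.mp (by omega)
    obtain ⟨t2, ht2⟩ := Multiset.exists_cons_of_mem hb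
    have hsub : a ::ₘ b ::ₘ t2 ≤ m := by
      rw [← ht2, ← ht1]
      exact Multiset.filter_le _ m
    obtain ⟨w, hw⟩ := Multiset.le_iff_exists_add.mp hsub
    have hmema : a ∈ m.filter (fun i => 0 < i.val ∧ i.val < d) := ha
    have hmemb : b ∈ m.filter (fun i => 0 < i.val ∧ i.val < d) := by
      rw [ht1]; exact Multiset.mem_cons_of_mem hb
    have hpa : 0 < a.val ∧ a.val < d := (Multiset.mem_filter.mp hmema).2
    have hpb : 0 < b.val ∧ b.val < d := (Multiset.mem_filter.mp hmemb).2
    obtain ⟨x, y, hxy, hxp, hyp, hmeq⟩ :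
        ∃ x y : Fin (d+1), x.val ≤ y.val ∧ (0 < x.val ∧ x.val < d) ∧
          (0 < y.val ∧ y.val < d) ∧ m = x ::ₘ y ::ₘ (t2 + w) := by
      rcases le_total a.val b.val with h | h
      · exact ⟨a, b, h, hpa, hpb, by rw [hw, Multiset.cons_add, Multiset.cons_add]⟩
      · exact ⟨b, a, h, hpb, hpa, by
          rw [hw, Multiset.cons_swap, Multiset.cons_add, Multiset.cons_add]⟩
    clear hw hsub ht1 ht2 ha hb hmema hmemb hbase ht1card
    subst hmeq
    set! x' : Fin (d+1) := ⟨x.val - 1, by omega⟩ with hx'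
    set! y' : Fin (d+1) := ⟨y.val + 1, by omega⟩ with hy'
    have hdiff := step d hd x y (t2 + w) hxp.1 hxy hyp.2
    rw [← hx', ← hy'] at hdiff
    have hcard : Multiset.card (x' ::ₘ y' ::ₘ (t2 + w)) =
        Multiset.card (x ::ₘ y ::ₘ (t2 + w)) := by simp
    have hsum_cons : ∀ (z : Fin (d+1)) (t : Multiset (Fin (d+1))),
        msum d (z ::ₘ t) = z.val + msum d t := by
      intro z t; simp [msum]
    have hsq_cons : ∀ (z : Fin (d+1)) (t : Multiset (Fin (d+1))),
        msq d (z ::ₘ t) = z.val * z.val + msq d t := by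
      intro z t; simp [msq]
    have hmsum : msum d (x' ::ₘ y' ::ₘ (t2 + w)) = msum d (x ::ₘ y ::ₘ (t2 + w)) := by
      rw [hsum_cons, hsum_cons, hsum_cons, hsum_cons, hx', hy']
      show (x.val - 1) + ((y.val + 1) + msum d (t2 + w)) =
        x.val + (y.val + msum d (t2 + w))
      omega
    have hmsq : msq d (x ::ₘ y ::ₘ (t2 + w)) < msq d (x' ::ₘ y' ::ₘ (t2 + w)) := by
      rw [hsq_cons, hsq_cons, hsq_cons, hsq_cons, hx', hy']
      show x.val * x.val + (y.val * y.val + msq d (t2 + w)) <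
        (x.val - 1) * (x.val - 1) + ((y.val + 1) * (y.val + 1) + msq d (t2 + w))
      obtain ⟨u, hu⟩ : ∃ u, x.val = u + 1 := ⟨x.val - 1, by omega⟩
      rw [hu]
      have huu : u + 1 - 1 = u := by omega
      rw [huu]
      nlinarith [hxy, hu]
    have hlt : Multiset.card (x' ::ₘ y' ::ₘ (t2 + w)) * (d * d) -
        msq d (x' ::ₘ y' ::ₘ (t2 + w)) < n := by
      have hb1 := msq_le d (x' ::ₘ y' ::ₘ (t2 + w))
      have hb2 := msq_le d (x ::ₘ y ::ₘ (t2 + w))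
      rw [hcard] at hb1 ⊢
      omega
    have hih := ih _ hlt _ rfl
    rw [hcard, hmsum] at hih
    have hmem := (Irel d).add_mem hdiff hih
    convert hmem using 1
    ring

lemma monomial_eq_mprod (σ : Fin (d+1) →₀ ℕ) :
    (monomial σ (1:ℂ)) = mprod d σ.toMultiset := by
  rw [monomial_eq, C_1, one_mul, mprod, Finsupp.toMultiset_map,
    Finsupp.prod_toMultiset, Finsupp.prod_mapDomain_index_inj (MvPolynomial.X_injective)]

lemma E_inj (hd : 1 ≤ d) (p q : ℕ × ℕ) (hp : p.2 ≤ p.1 * d) (hq : q.2 ≤ q.1 * d)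
    (h : Finsupp.single (0 : Fin 2) (p.1 * d - p.2) + Finsupp.single 1 p.2 =
      Finsupp.single (0 : Fin 2) (q.1 * d - q.2) + Finsupp.single 1 q.2) : p = q := by
  have h0 := congrArg (fun f : Fin 2 →₀ ℕ => f 0) h
  have h1 := congrArg (fun f : Fin 2 →₀ ℕ => f 1) h
  simp [Finsupp.single_apply] at h0 h1
  have h2 : p.1 * d = q.1 * d := by omega
  have h3 : p.1 = q.1 := Nat.eq_of_mul_eq_mul_right (by omega) h2
  exact Prod.ext h3 h1

lemma ker_le_span (hd : 1 ≤ d) : RingHom.ker (eps d) ≤ Irel d := by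
  classical
  intro P hP
  have hP0 : eps d P = 0 := hP
  -- abbreviations
  set kk : (Fin (d+1) →₀ ℕ) → ℕ := fun σ => Multiset.card σ.toMultiset with hkk
  set ss : (Fin (d+1) →₀ ℕ) → ℕ := fun σ => msum d σ.toMultiset with hss
  have hbound : ∀ σ : Fin (d+1) →₀ ℕ, ss σ ≤ kk σ * d := fun σ => msum_le d _
  have hred : ∀ σ : Fin (d+1) →₀ ℕ, (monomial σ (1:ℂ)) - Nf d (kk σ) (ss σ) ∈ Irel d := by
    intro σ
    rw [monomial_eq_mprod]
    exact reduce d hd _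
  set Q : MvPolynomial (Fin (d+1)) ℂ :=
    ∑ σ ∈ P.support, C (coeff σ P) * Nf d (kk σ) (ss σ) with hQdef
  have hPQ : P - Q ∈ Irel d := by
    have hrepr : P - Q =
        ∑ σ ∈ P.support, C (coeff σ P) * ((monomial σ 1) - Nf d (kk σ) (ss σ)) := by
      simp only [mul_sub, Finset.sum_sub_distrib]
      congr 1
      · simp only [C_mul_monomial, mul_one]
        exact (support_sum_monomial_coeff P).symm
    rw [hrepr]
    exact Ideal.sum_mem _ (fun σ _ => Ideal.mul_mem_left _ _ (hred σ))
  have hεQ : eps d Q = 0 := by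
    have h1 : eps d (P - Q) = 0 := span_le_ker d hd hPQ
    rw [map_sub, hP0, zero_sub, neg_eq_zero] at h1
    exact h1
  suffices hQ0 : Q = 0 by
    rw [hQ0, sub_zero] at hPQ
    exact hPQ
  -- group by (k, s)
  set F : (Fin (d+1) →₀ ℕ) → ℕ × ℕ := fun σ => (kk σ, ss σ) with hF
  set T : Finset (ℕ × ℕ) := P.support.image F with hT
  set D : ℕ × ℕ → ℂ := fun p => ∑ σ ∈ P.support.filter (fun σ => F σ = p), coeff σ P with hD
  have hQ2 : Q = ∑ p ∈ T, C (D p) * Nf d p.1 p.2 := by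
    rw [hQdef, ← Finset.sum_fiberwise_of_maps_to (fun σ hσ => Finset.mem_image_of_mem F hσ)
      (fun σ => C (coeff σ P) * Nf d (kk σ) (ss σ))]
    refine Finset.sum_congr rfl (fun p hp => ?_)
    rw [hD]
    rw [map_sum, Finset.sum_mul]
    refine Finset.sum_congr rfl (fun σ hσ => ?_)
    have hFσ : F σ = p := (Finset.mem_filter.mp hσ).2
    rw [← hFσ]
  have hTbound : ∀ p ∈ T, p.2 ≤ p.1 * d := by
    intro p hp
    obtain ⟨σ, _, rfl⟩ := Finset.mem_image.mp hp
    exact hbound σ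
  have hDzero : ∀ p ∈ T, D p = 0 := by
    intro p hp
    set Ep : Fin 2 →₀ ℕ :=
      Finsupp.single (0 : Fin 2) (p.1 * d - p.2) + Finsupp.single 1 p.2 with hEp
    have hcoeff := congrArg (coeff Ep) hεQ
    rw [hQ2] at hcoeff
    simp only [map_sum, map_mul, coeff_zero, MvPolynomial.coeff_sum] at hcoeff
    have hterm : ∀ q ∈ T, coeff Ep ((eps d) (C (D q)) * (eps d) (Nf d q.1 q.2)) =
        D q * (if (Finsupp.single (0 : Fin 2) (q.1 * d - q.2) + Finsupp.single 1 q.2) = Ep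
          then (1:ℂ) else 0) := by
      intro q hq
      rw [show (eps d) (C (D q)) = C (D q) from by simp [eps],
        eps_Nf d hd q.1 q.2 (hTbound q hq), X_pow_eq_monomial, X_pow_eq_monomial,
        monomial_mul, mul_one, coeff_C_mul, coeff_monomial]
    rw [Finset.sum_congr rfl hterm] at hcoeff
    rw [Finset.sum_eq_single_of_mem p hp (fun q hq hqp => by
      rw [if_neg, mul_zero]
      intro hEq
      rw [hEp] at hEq
      exact hqp (E_inj d hd q p (hTbound q hq) (hTbound p hp) hEq))] at hcoeff
    rw [hEp, if_pos rfl, mul_one] at hcoeff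
    exact hcoeff
  rw [hQ2]
  refine Finset.sum_eq_zero (fun p hp => ?_)
  rw [hDzero p hp, map_zero, zero_mul]

end Stmt12Aux


/-- `ker ε` is the ideal generated by the polynomials
`A_{i−1}·A_{j+1} − A_i·A_j` for `1 ≤ i ≤ j ≤ d−1`. -/
theorem stmt12 (d : ℕ) (hd : 1 ≤ d) :
    RingHom.ker (eps d) = Ideal.span
      {P | ∃ i j : ℕ, 1 ≤ i ∧ i ≤ j ∧ j ≤ d - 1 ∧
        P = Av d (i - 1) * Av d (j + 1) - Av d i * Av d j} := by
  have h : Ideal.span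
      {P | ∃ i j : ℕ, 1 ≤ i ∧ i ≤ j ∧ j ≤ d - 1 ∧
        P = Av d (i - 1) * Av d (j + 1) - Av d i * Av d j} = Stmt12Aux.Irel d := rfl
  rw [h]
  exact le_antisymm (Stmt12Aux.ker_le_span d hd) (Stmt12Aux.span_le_ker d hd)
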